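/- Let k : ℝ → ℝ be a nonnegative probability density with ∫ k(x)e^{λx} dx < ∞ for all λ. Define A(λ) = ∫ k(x)e^{λx} dx - 1 - α with α > 0. If k has positive mass on both (0,∞) and (-∞,0) (i.e., k(x⁺) > 0, k(x⁻) > 0 at some continuity points x⁺ > 0 > x⁻ with k continuous), then λA'(λ) - A(λ) = ∫ k(x)e^{λx}(λx - 1) dx + 1 + α → +∞ as |λ| → ∞. -/

import Mathlib

open Real Set Filter MeasureTheory

lemma exp_mid_le (a b c x : ℝ) (hac : a ≤ c) (hcb : c ≤ b) :
    Real.exp (c * x) ≤ Real.exp (a * x) + Real.exp (b * x) := by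
  rcases le_or_gt 0 x with hx | hx
  · have : Real.exp (c * x) ≤ Real.exp (b * x) := by
      apply Real.exp_le_exp.mpr; nlinarith
    linarith [Real.exp_pos (a * x)]
  · have : Real.exp (c * x) ≤ Real.exp (a * x) := by
      apply Real.exp_le_exp.mpr; nlinarith
    linarith [Real.exp_pos (b * x)]

lemma abs_le_exp_add (x : ℝ) : |x| ≤ Real.exp x + Real.exp (-x) := by
  rcases le_or_gt 0 x with hx | hx
  · rw [abs_of_nonneg hx]
    linarith [Real.add_one_le_exp x, Real.exp_pos (-x)]
  · rw [abs_of_neg hx]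
    linarith [Real.add_one_le_exp (-x), Real.exp_pos x]

lemma int_mul (k : ℝ → ℝ) (hc : Continuous k) (hn : ∀ x, 0 ≤ k x)
    (he : ∀ lam : ℝ, Integrable (fun x => k x * Real.exp (lam * x))) (lam : ℝ) :
    Integrable (fun x => k x * (x * Real.exp (lam * x))) := by
  have hg : Integrable (fun x => k x * Real.exp ((lam + 1) * x) +
      k x * Real.exp ((lam - 1) * x)) := (he _).add (he _)
  refine hg.mono' ?_ ?_
  · exact (hc.mul (continuous_id.mul
      (continuous_const.mul continuous_id).rexp)).aestronglyMeasurable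
  · filter_upwards with x
    have h1 : |x| * Real.exp (lam * x) ≤ Real.exp ((lam + 1) * x) + Real.exp ((lam - 1) * x) := by
      calc |x| * Real.exp (lam * x)
          ≤ (Real.exp x + Real.exp (-x)) * Real.exp (lam * x) :=
            mul_le_mul_of_nonneg_right (abs_le_exp_add x) (Real.exp_pos _).le
        _ = Real.exp ((lam + 1) * x) + Real.exp ((lam - 1) * x) := by
            rw [add_mul, ← Real.exp_add, ← Real.exp_add]; ring_nf
    have hk := hn x
    calc ‖k x * (x * Real.exp (lam * x))‖ = k x * (|x| * Real.exp (lam * x)) := by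
          rw [Real.norm_eq_abs, abs_mul, abs_of_nonneg hk, abs_mul,
            abs_of_nonneg (Real.exp_pos _).le]
      _ ≤ k x * (Real.exp ((lam + 1) * x) + Real.exp ((lam - 1) * x)) :=
          mul_le_mul_of_nonneg_left h1 hk
      _ = _ := by ring

lemma hasDeriv_M (k : ℝ → ℝ) (hc : Continuous k) (hn : ∀ x, 0 ≤ k x)
    (he : ∀ lam : ℝ, Integrable (fun x => k x * Real.exp (lam * x))) (lam : ℝ) :
    HasDerivAt (fun l => ∫ x : ℝ, k x * Real.exp (l * x))
      (∫ x : ℝ, k x * (x * Real.exp (lam * x))) lam := by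
  have hbound : Integrable (fun x => k x * Real.exp ((lam - 2) * x) +
      k x * Real.exp ((lam + 2) * x) +
      (k x * Real.exp ((lam - 2) * x) + k x * Real.exp ((lam + 2) * x))) :=
    ((he _).add (he _)).add ((he _).add (he _))
  have h := hasDerivAt_integral_of_dominated_loc_of_deriv_le (μ := volume)
    (F := fun l x => k x * Real.exp (l * x)) (F' := fun l x => k x * (x * Real.exp (l * x)))
    (x₀ := lam) (s := Metric.ball lam 1) (Metric.ball_mem_nhds lam one_pos)
    (Filter.Eventually.of_forall fun l =>
      (hc.mul (continuous_const.mul continuous_id).rexp).aestronglyMeasurable)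
    (he lam)
    ((hc.mul (continuous_id.mul
      (continuous_const.mul continuous_id).rexp)).aestronglyMeasurable)
    ?_ hbound ?_
  · exact h.2
  · filter_upwards with x l hl
    rw [Metric.mem_ball, Real.dist_eq] at hl
    have hl1 : lam - 1 < l := by cases abs_lt.mp hl; linarith
    have hl2 : l < lam + 1 := by cases abs_lt.mp hl; linarith
    have h1 : |x| * Real.exp (l * x) ≤ Real.exp ((l + 1) * x) + Real.exp ((l - 1) * x) := by
      calc |x| * Real.exp (l * x)
          ≤ (Real.exp x + Real.exp (-x)) * Real.exp (l * x) :=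
            mul_le_mul_of_nonneg_right (abs_le_exp_add x) (Real.exp_pos _).le
        _ = Real.exp ((l + 1) * x) + Real.exp ((l - 1) * x) := by
            rw [add_mul, ← Real.exp_add, ← Real.exp_add]; ring_nf
    have h2 : Real.exp ((l + 1) * x) ≤ Real.exp ((lam - 2) * x) + Real.exp ((lam + 2) * x) :=
      exp_mid_le _ _ _ _ (by linarith) (by linarith)
    have h3 : Real.exp ((l - 1) * x) ≤ Real.exp ((lam - 2) * x) + Real.exp ((lam + 2) * x) :=
      exp_mid_le _ _ _ _ (by linarith) (by linarith)
    have hk := hn x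
    calc ‖k x * (x * Real.exp (l * x))‖ = k x * (|x| * Real.exp (l * x)) := by
          rw [Real.norm_eq_abs, abs_mul, abs_of_nonneg hk, abs_mul,
            abs_of_nonneg (Real.exp_pos _).le]
      _ ≤ k x * (Real.exp ((l + 1) * x) + Real.exp ((l - 1) * x)) :=
          mul_le_mul_of_nonneg_left h1 hk
      _ ≤ k x * ((Real.exp ((lam - 2) * x) + Real.exp ((lam + 2) * x)) +
            (Real.exp ((lam - 2) * x) + Real.exp ((lam + 2) * x))) := by
          apply mul_le_mul_of_nonneg_left _ hk; linarith
      _ = _ := by ring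
  · filter_upwards with x l _
    have hd : HasDerivAt (fun l : ℝ => l * x) x l := by
      simpa using (hasDerivAt_id l).mul_const x
    simpa [mul_comm] using (hd.exp.const_mul (k x))

lemma exp_mul_sub_one_ge (t : ℝ) : -1 ≤ Real.exp t * (t - 1) := by
  have h := Real.add_one_le_exp (-t)
  have h2 := Real.exp_pos t
  have h3 : Real.exp t * Real.exp (-t) = 1 := by
    rw [← Real.exp_add]; simp
  nlinarith

lemma aux_tendsto (k : ℝ → ℝ) (hc : Continuous k) (hn : ∀ x, 0 ≤ k x)
    (hki : ∫ x : ℝ, k x = 1)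
    (he : ∀ lam : ℝ, Integrable (fun x => k x * Real.exp (lam * x)))
    (xp : ℝ) (hxp : 0 < xp) (hkxp : 0 < k xp) :
    Tendsto (fun lam : ℝ => ∫ x : ℝ, k x * Real.exp (lam * x) * (lam * x - 1)) atTop atTop := by
  have hkint : Integrable k := by
    have := he 0; simpa using this
  have hev : ∀ᶠ y in nhds xp, k xp / 2 < k y :=
    hc.continuousAt.eventually (eventually_gt_nhds (by linarith))
  obtain ⟨ε, hε, hball⟩ := Metric.eventually_nhds_iff.mp hev
  set δ := min (ε / 2) (xp / 2) with hδdef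
  have hδpos : 0 < δ := lt_min (by linarith) (by linarith)
  have hδle : δ ≤ xp / 2 := min_le_right _ _
  have hδε : δ ≤ ε / 2 := min_le_left _ _
  set a := xp - δ with ha
  have hapos : 0 < a := by rw [ha]; linarith
  set S : Set ℝ := Icc (xp - δ) (xp + δ) with hS
  have hSmeas : MeasurableSet S := measurableSet_Icc
  have hSvol : volume S = ENNReal.ofReal (2 * δ) := by
    rw [hS, Real.volume_Icc]; ring_nf
  have hSvolne : volume S ≠ ⊤ := by rw [hSvol]; exact ENNReal.ofReal_ne_top
  have hSvolR : (volume S).toReal = 2 * δ := by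
    rw [hSvol, ENNReal.toReal_ofReal (by linarith)]
  have hkS : ∀ x ∈ S, k xp / 2 ≤ k x := by
    intro x hx
    apply le_of_lt
    apply hball
    rw [Real.dist_eq]
    rw [hS, mem_Icc] at hx
    rw [abs_lt]; constructor
    · linarith [hx.1, hδε]
    · linarith [hx.2, hδε]
  have hfint : ∀ lam : ℝ, Integrable (fun x => k x * Real.exp (lam * x) * (lam * x - 1)) := by
    intro lam
    have h1 : Integrable (fun x => lam * (k x * (x * Real.exp (lam * x))) -
        k x * Real.exp (lam * x)) :=
      ((int_mul k hc hn he lam).const_mul lam).sub (he lam)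
    apply h1.congr
    filter_upwards with x
    ring
  have key : ∀ lam : ℝ, 1 / a ≤ lam →
      k xp / 2 * (Real.exp (lam * a) * (lam * a - 1)) * (2 * δ) - 1 ≤
        ∫ x : ℝ, k x * Real.exp (lam * x) * (lam * x - 1) := by
    intro lam hlam
    have hla : 1 ≤ lam * a := by
      rw [div_le_iff₀ hapos] at hlam; linarith
    have hlampos : 0 < lam := by nlinarith
    have hS1 : k xp / 2 * (Real.exp (lam * a) * (lam * a - 1)) * (volume S).toReal
        ≤ ∫ x in S, k x * Real.exp (lam * x) * (lam * x - 1) := by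
      apply setIntegral_ge_of_const_le_real hSmeas hSvolne
      · intro x hx
        have hax : a ≤ x := by rw [ha]; exact hx.1
        have e1 : Real.exp (lam * a) ≤ Real.exp (lam * x) := by
          apply Real.exp_le_exp.mpr; nlinarith
        have hkx := hkS x hx
        have h0 : (0:ℝ) ≤ lam * a - 1 := by linarith
        have he1 := (Real.exp_pos (lam * a)).le
        have he2 := (Real.exp_pos (lam * x)).le
        calc k xp / 2 * (Real.exp (lam * a) * (lam * a - 1))
            ≤ k x * (Real.exp (lam * a) * (lam * a - 1)) :=
              mul_le_mul_of_nonneg_right hkx (by positivity)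
          _ ≤ k x * (Real.exp (lam * x) * (lam * x - 1)) := by
              apply mul_le_mul_of_nonneg_left _ (hn x)
              have : lam * a ≤ lam * x := by nlinarith
              nlinarith
          _ = k x * Real.exp (lam * x) * (lam * x - 1) := by ring
      · exact (hfint lam).integrableOn
    have hS2 : -1 ≤ ∫ x in Sᶜ, k x * Real.exp (lam * x) * (lam * x - 1) := by
      have hmono : ∫ x in Sᶜ, -(k x) ≤ ∫ x in Sᶜ, k x * Real.exp (lam * x) * (lam * x - 1) := by
        apply setIntegral_mono_on (f := fun x => -(k x)) hkint.neg.integrableOn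
          ((hfint lam).integrableOn) hSmeas.compl
        intro x _
        have h := exp_mul_sub_one_ge (lam * x)
        have := hn x
        nlinarith
      have hle : ∫ x in Sᶜ, k x ≤ 1 := by
        rw [← hki]
        exact setIntegral_le_integral hkint (Filter.Eventually.of_forall hn)
      rw [integral_neg] at hmono
      linarith
    have hsplit := integral_add_compl hSmeas (hfint lam)
    rw [hSvolR] at hS1
    linarith [hsplit.ge, hsplit.le]
  have hL : Tendsto (fun lam : ℝ =>
      k xp / 2 * (Real.exp (lam * a) * (lam * a - 1)) * (2 * δ) - 1) atTop atTop := by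
    have t1 : Tendsto (fun lam : ℝ => lam * a) atTop atTop :=
      Tendsto.atTop_mul_const hapos tendsto_id
    have t2 : Tendsto (fun lam : ℝ => Real.exp (lam * a)) atTop atTop :=
      Real.tendsto_exp_atTop.comp t1
    have t3 : Tendsto (fun lam : ℝ => lam * a - 1) atTop atTop := by
      have := tendsto_atTop_add_const_right atTop (-1) t1
      simpa [sub_eq_add_neg] using this
    have t4 := t2.atTop_mul_atTop₀ t3
    have t5 : Tendsto (fun lam : ℝ =>
        k xp / 2 * (Real.exp (lam * a) * (lam * a - 1))) atTop atTop :=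
      t4.const_mul_atTop (by positivity)
    have t6 := t5.atTop_mul_const (show (0:ℝ) < 2 * δ by linarith)
    have := tendsto_atTop_add_const_right atTop (-1) t6
    simpa [sub_eq_add_neg] using this
  apply tendsto_atTop_mono' atTop _ hL
  filter_upwards [eventually_ge_atTop (1 / a)] with lam hlam
  exact key lam hlam

theorem stmt13 (k : ℝ → ℝ) (α : ℝ) (hα : 0 < α)
    (hk_cont : Continuous k) (hk_nonneg : ∀ x, 0 ≤ k x)
    (hk_int : ∫ x : ℝ, k x = 1)
    (hk_exp : ∀ lam : ℝ, Integrable (fun x => k x * Real.exp (lam * x)))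
    (xp : ℝ) (hxp : 0 < xp) (hkxp : 0 < k xp)
    (xm : ℝ) (hxm : xm < 0) (hkxm : 0 < k xm)
    (A : ℝ → ℝ)
    (hA : ∀ lam, A lam = (∫ x : ℝ, k x * Real.exp (lam * x)) - 1 - α) :
    (∀ lam : ℝ, lam * deriv A lam - A lam =
      (∫ x : ℝ, k x * Real.exp (lam * x) * (lam * x - 1)) + 1 + α) ∧
    Tendsto (fun lam => lam * deriv A lam - A lam) atTop atTop ∧
    Tendsto (fun lam => lam * deriv A lam - A lam) atBot atTop := by
  have hAfun : A = fun l => (∫ x : ℝ, k x * Real.exp (l * x)) - 1 - α := funext hA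
  have hderiv : ∀ lam, deriv A lam = ∫ x : ℝ, k x * (x * Real.exp (lam * x)) := by
    intro lam
    have h := ((hasDeriv_M k hk_cont hk_nonneg hk_exp lam).sub_const 1).sub_const α
    rw [hAfun]
    exact h.deriv
  have hpart1 : ∀ lam : ℝ, lam * deriv A lam - A lam =
      (∫ x : ℝ, k x * Real.exp (lam * x) * (lam * x - 1)) + 1 + α := by
    intro lam
    rw [hderiv lam, hA lam]
    have h1 : Integrable (fun x : ℝ => lam * (k x * (x * Real.exp (lam * x)))) :=
      (int_mul k hk_cont hk_nonneg hk_exp lam).const_mul lam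
    have heq : (fun x : ℝ => lam * (k x * (x * Real.exp (lam * x))) - k x * Real.exp (lam * x)) =
        fun x => k x * Real.exp (lam * x) * (lam * x - 1) := by
      funext x; ring
    have h2 : (∫ x : ℝ, lam * (k x * (x * Real.exp (lam * x)))) -
        ∫ x : ℝ, k x * Real.exp (lam * x) =
        ∫ x : ℝ, k x * Real.exp (lam * x) * (lam * x - 1) := by
      rw [← MeasureTheory.integral_sub h1 (hk_exp lam), heq]
    have h3 : lam * ∫ x : ℝ, k x * (x * Real.exp (lam * x)) =
        ∫ x : ℝ, lam * (k x * (x * Real.exp (lam * x))) :=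
      (MeasureTheory.integral_const_mul lam _).symm
    rw [h3]
    linarith [h2]
  refine ⟨hpart1, ?_, ?_⟩
  · have haux := aux_tendsto k hk_cont hk_nonneg hk_int hk_exp xp hxp hkxp
    have h2 := tendsto_atTop_add_const_right atTop α
      (tendsto_atTop_add_const_right atTop 1 haux)
    apply h2.congr
    intro lam; rw [hpart1 lam]
  · have hc' : Continuous (fun x : ℝ => k (-x)) := hk_cont.comp continuous_neg
    have hn' : ∀ x : ℝ, 0 ≤ k (-x) := fun x => hk_nonneg (-x)
    have hki' : ∫ x : ℝ, k (-x) = 1 := by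
      rw [integral_neg_eq_self k volume]; exact hk_int
    have he' : ∀ lam : ℝ, Integrable (fun x : ℝ => k (-x) * Real.exp (lam * x)) := by
      intro lam
      have h0 := (hk_exp (-lam)).comp_neg
      apply h0.congr
      filter_upwards with x
      show k (-x) * Real.exp (-lam * -x) = k (-x) * Real.exp (lam * x)
      rw [neg_mul_neg]
    have haux := aux_tendsto (fun x => k (-x)) hc' hn' hki' he' (-xm) (by linarith)
      (by show 0 < k (-(-xm)); rw [neg_neg]; exact hkxm)
    have hcomp := haux.comp (tendsto_neg_atBot_atTop (G := ℝ))
    have h2 := tendsto_atTop_add_const_right atBot α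
      (tendsto_atTop_add_const_right atBot 1 hcomp)
    apply h2.congr
    intro lam
    rw [hpart1 lam]
    congr 2
    show (∫ x : ℝ, k (-x) * Real.exp (-lam * x) * (-lam * x - 1)) = _
    have heq : (fun x : ℝ => k (-x) * Real.exp (-lam * x) * (-lam * x - 1)) =
        fun x : ℝ => (fun y : ℝ => k y * Real.exp (lam * y) * (lam * y - 1)) (-x) := by
      funext x
      show k (-x) * Real.exp (-lam * x) * (-lam * x - 1) =
        k (-x) * Real.exp (lam * -x) * (lam * -x - 1)
      rw [show lam * -x = -lam * x by ring]
    rw [heq, integral_neg_eq_self (fun y : ℝ => k y * Real.exp (lam * y) * (lam * y - 1)) volume]
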